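/- If f : 2^V → ℝ satisfies f(X) = ∑_{C ∈ P} f(X ∩ C) for all X ⊆ V for a partition P of V, and f is submodular with f(∅)=0, then the base polyhedron decomposes as a direct sum: B(f) = { ⊕_{C ∈ P} x_C : x_C ∈ B_C(f) for each C ∈ P }, where B_C(f) = {x ∈ ℝ^C : x(X) ≤ f(X) ∀ X ⊆ C, x(C) = f(C)}. -/
import Mathlib


/-- Decomposition of the base polyhedron: if a submodular `f` with `f ∅ = 0`
decomposes additively across a partition `P` of `V`, then a vector lies in the
base polyhedron `B(f)` if and only if, for each block `C ∈ P`, its restriction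
to `C` lies in the base polyhedron `B_C(f)` of the subgame on `C`.  (This is
exactly the statement that `B(f)` is the direct sum of the `B_C(f)`.) -/
theorem base_polyhedron_decomposition {V : Type*} [Fintype V] [DecidableEq V]
    (f : Finset V → ℝ) (P : Finset (Finset V))
    (h0 : f ∅ = 0)
    (hsub : ∀ X Y : Finset V, f (X ∪ Y) + f (X ∩ Y) ≤ f X + f Y)
    (hne : ∀ C ∈ P, C.Nonempty)
    (hdisj : ∀ C ∈ P, ∀ C' ∈ P, C ≠ C' → Disjoint C C')
    (hcover : ∀ i : V, ∃ C ∈ P, i ∈ C)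
    (hdec : ∀ X : Finset V, f X = ∑ C ∈ P, f (X ∩ C)) :
    ∀ x : V → ℝ,
      ((∀ X : Finset V, ∑ i ∈ X, x i ≤ f X) ∧ ∑ i, x i = f Finset.univ) ↔
        (∀ C ∈ P, (∀ X : Finset V, X ⊆ C → ∑ i ∈ X, x i ≤ f X) ∧
          ∑ i ∈ C, x i = f C) := by
  intro x
  -- partition sum lemma
  have hpd : ∀ X : Finset V, (↑P : Set (Finset V)).PairwiseDisjoint
      (fun C => X ∩ C) := by
    intro X C hC C' hC' hCC'
    exact Finset.disjoint_of_subset_left (Finset.inter_subset_right)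
      (Finset.disjoint_of_subset_right (Finset.inter_subset_right)
        (hdisj C hC C' hC' hCC'))
  have hbiU : ∀ X : Finset V, X = P.biUnion (fun C => X ∩ C) := by
    intro X; ext i
    simp only [Finset.mem_biUnion, Finset.mem_inter]
    constructor
    · intro hi
      obtain ⟨C, hC, hiC⟩ := hcover i
      exact ⟨C, hC, hi, hiC⟩
    · rintro ⟨C, _, hi, _⟩; exact hi
  have hpart : ∀ X : Finset V, ∑ i ∈ X, x i = ∑ C ∈ P, ∑ i ∈ X ∩ C, x i := by
    intro X
    conv_lhs => rw [hbiU X]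
    exact Finset.sum_biUnion (hpd X)
  have huniv : ∀ C ∈ P, Finset.univ ∩ C = C := by
    intro C _; exact Finset.univ_inter C
  have hfu : f Finset.univ = ∑ C ∈ P, f C := by
    rw [hdec Finset.univ]
    exact Finset.sum_congr rfl fun C hC => by rw [huniv C hC]
  constructor
  · rintro ⟨hle, heq⟩
    have hsum : ∑ C ∈ P, ∑ i ∈ C, x i = ∑ C ∈ P, f C := by
      have := hpart Finset.univ
      rw [heq, hfu] at this
      rw [this]
      exact Finset.sum_congr rfl fun C hC => by rw [huniv C hC]
    have hptle : ∀ C ∈ P, ∑ i ∈ C, x i ≤ f C := fun C _ => hle C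
    have heach := (Finset.sum_eq_sum_iff_of_le hptle).mp hsum
    intro C hC
    exact ⟨fun X _ => hle X, heach C hC⟩
  · intro h
    constructor
    · intro X
      rw [hpart X, hdec X]
      refine Finset.sum_le_sum fun C hC => ?_
      exact (h C hC).1 (X ∩ C) Finset.inter_subset_right
    · rw [hpart Finset.univ, hfu]
      refine Finset.sum_congr rfl fun C hC => ?_
      rw [huniv C hC]
      exact (h C hC).2
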